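/- Let A_ℓ > 0, φ > 0, 0 < p < 1, and let c > 0 satisfy 2c·A_ℓ < φ. Set K := √(c·φ·A_ℓ/2), q₃* := (p/(1−p))·(2c·A_ℓ)/(φ − 2c·A_ℓ), and f_p := p/(√(1−p) − (1−p)). Then φ·(p + (1−p)·q₃*) + (1−p)(1−q₃*)·K > p·φ + √(1−p)·K if and only if f_p > (1/2)·√(φ/(2c·A_ℓ)) · (φ − 2c·A_ℓ)/(φ − K). -/

import Mathlib

set_option maxHeartbeats 1000000 in
/-- Case (3) benefit condition: the policy q₃* beats the no-signaling benchmark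
iff f_p > (1/2)√(φ/(2cA_ℓ))·(φ − 2cA_ℓ)/(φ − K). -/
theorem stmt_15 (Al φ p c : ℝ) (hAl : 0 < Al) (hφ : 0 < φ)
    (hp0 : 0 < p) (hp1 : p < 1) (hc0 : 0 < c) (hc : 2 * c * Al < φ)
    (K : ℝ) (hK : K = Real.sqrt (c * φ * Al / 2))
    (q₃ : ℝ) (hq₃ : q₃ = (p / (1 - p)) * (2 * c * Al) / (φ - 2 * c * Al))
    (fp : ℝ) (hfp : fp = p / (Real.sqrt (1 - p) - (1 - p))) :
    (p * φ + Real.sqrt (1 - p) * K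
        < φ * (p + (1 - p) * q₃) + (1 - p) * (1 - q₃) * K)
      ↔ (1 / 2) * Real.sqrt (φ / (2 * c * Al)) * ((φ - 2 * c * Al) / (φ - K))
          < fp := by
  have hD : 0 < φ - 2 * c * Al := by linarith
  have hcAl : (0:ℝ) < c * φ * Al / 2 := by positivity
  have hK0 : 0 < K := hK ▸ Real.sqrt_pos.mpr hcAl
  have hK2 : K ^ 2 = c * φ * Al / 2 := by rw [hK]; exact Real.sq_sqrt hcAl.le
  have hKφ : K < φ := by nlinarith [sq_nonneg (φ/2 - K)]
  have hφK : 0 < φ - K := by linarith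
  set s := Real.sqrt (1 - p) with hs
  have hp' : 0 < 1 - p := by linarith
  have hs2 : s ^ 2 = 1 - p := Real.sq_sqrt hp'.le
  have hs0 : 0 < s := Real.sqrt_pos.mpr hp'
  have hs1 : s < 1 := by nlinarith
  have hsub : 0 < s - (1 - p) := by nlinarith
  have hsqrt2 : Real.sqrt (φ / (2 * c * Al)) = φ / (2 * K) := by
    rw [show φ / (2 * c * Al) = (φ / (2 * K)) ^ 2 by
      field_simp
      nlinarith [hK2]]
    exact Real.sqrt_sq (by positivity)
  have e2 : (1/2) * (φ/(2*K)) * ((φ - 2*c*Al)/(φ - K))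
      = (φ * (φ - 2*c*Al)) / (4*K*(φ - K)) := by
    rw [div_mul_div_comm, div_mul_div_comm]
    ring_nf
  have e1 : φ*(p+(1-p)*q₃)+(1-p)*(1-q₃)*K - (p*φ + s*K)
      = K * (4*p*K*(φ-K) - (s-(1-p))*φ*(φ-2*c*Al)) / (φ*(φ-2*c*Al)) := by
    rw [hq₃]
    have h1 : (1:ℝ) - p ≠ 0 := by linarith
    have h2 : φ - 2*c*Al ≠ 0 := ne_of_gt hD
    have h3 : φ ≠ 0 := ne_of_gt hφ
    field_simp
    linear_combination (-4*p*(φ-K)) * hK2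
  rw [hfp, hsqrt2, e2, ← sub_pos, e1,
    div_lt_div_iff₀ (by positivity) hsub, lt_div_iff₀ (by positivity)]
  constructor <;> intro h <;> nlinarith [hK0]
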